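/- Fix reals d₂ > 0, β > 0, S₀ > 0, μ₂ > 0 with βS₀/μ₂ > 1, and θ ∈ ℝ, and for c > 0 define Δ_c(λ) = d₂(e^{λ sin θ} + e^{−λ sin θ} + e^{λ cos θ} + e^{−λ cos θ} − 4) − cλ + βS₀ − μ₂. Let c* > 0 and λ* > 0 be the critical speed and exponent (Δ_{c*}(λ*) = 0 and ∂Δ_c/∂λ = 0 at (λ*, c*)). Then for every c > c*, the equation Δ_c(λ) = 0 has exactly two positive roots λ₁ < λ* < λ₂, and moreover Δ_c(λ) > 0 for 0 < λ < λ₁, Δ_c(λ) < 0 for λ₁ < λ < λ₂, and Δ_c(λ) > 0 for λ > λ₂. -/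

import Mathlib

noncomputable def charDelta (d₂ β S₀ μ₂ θ c lam : ℝ) : ℝ :=
  d₂ * (Real.exp (lam * Real.sin θ) + Real.exp (-(lam * Real.sin θ)) +
        Real.exp (lam * Real.cos θ) + Real.exp (-(lam * Real.cos θ)) - 4) -
  c * lam + β * S₀ - μ₂

lemma cosh_bd_nonneg (x : ℝ) (hx : 0 ≤ x) : 2 + x^2/4 ≤ Real.exp x + Real.exp (-x) := by
  have h1 : 1 + x/2 ≤ Real.exp (x/2) := by linarith [Real.add_one_le_exp (x/2)]
  have hx2 : Real.exp (x/2)^2 = Real.exp x := by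
    rw [sq, ← Real.exp_add]; norm_num
  have hsq : (1 + x/2)^2 ≤ Real.exp x := by nlinarith [Real.exp_pos (x/2)]
  have h2 : 1 - x ≤ Real.exp (-x) := by linarith [Real.add_one_le_exp (-x)]
  nlinarith

lemma cosh_bd (x : ℝ) : 2 + x^2/4 ≤ Real.exp x + Real.exp (-x) := by
  rcases le_total 0 x with h | h
  · exact cosh_bd_nonneg x h
  · have := cosh_bd_nonneg (-x) (by linarith)
    rw [neg_neg] at this
    nlinarith [this]

lemma exp_add_exp_neg_ge (x : ℝ) : 2 ≤ Real.exp x + Real.exp (-x) :=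
  le_trans (by nlinarith [sq_nonneg x]) (cosh_bd x)

lemma expTerm (a lam : ℝ) : HasDerivAt (fun l : ℝ => Real.exp (l * a)) (Real.exp (lam * a) * a) lam := by
  simpa using (((hasDerivAt_id lam).mul_const a)).exp

lemma expTermNeg (a lam : ℝ) : HasDerivAt (fun l : ℝ => Real.exp (-(l * a))) (Real.exp (-(lam * a)) * (-a)) lam := by
  simpa using ((((hasDerivAt_id lam).mul_const a)).neg).exp

lemma hasDerivAt_charDelta (d₂ β S₀ μ₂ θ c lam : ℝ) :
    HasDerivAt (charDelta d₂ β S₀ μ₂ θ c)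
      (d₂ * (Real.exp (lam * Real.sin θ) * Real.sin θ +
             Real.exp (-(lam * Real.sin θ)) * (-Real.sin θ) +
             Real.exp (lam * Real.cos θ) * Real.cos θ +
             Real.exp (-(lam * Real.cos θ)) * (-Real.cos θ)) - c) lam := by
  unfold charDelta
  have h1 := expTerm (Real.sin θ) lam
  have h2 := expTermNeg (Real.sin θ) lam
  have h3 := expTerm (Real.cos θ) lam
  have h4 := expTermNeg (Real.cos θ) lam
  have hsum := ((((h1.add h2).add h3).add h4).sub_const 4).const_mul d₂
  have hc : HasDerivAt (fun l : ℝ => c * l) c lam := by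
    simpa using (hasDerivAt_id lam).const_mul c
  have := ((hsum.sub hc).add_const (β * S₀)).sub_const μ₂
  exact this

lemma deriv_charDelta (d₂ β S₀ μ₂ θ c : ℝ) :
    deriv (charDelta d₂ β S₀ μ₂ θ c) = fun lam =>
      (d₂ * (Real.exp (lam * Real.sin θ) * Real.sin θ +
             Real.exp (-(lam * Real.sin θ)) * (-Real.sin θ) +
             Real.exp (lam * Real.cos θ) * Real.cos θ +
             Real.exp (-(lam * Real.cos θ)) * (-Real.cos θ)) - c) := by
  funext lam
  exact (hasDerivAt_charDelta d₂ β S₀ μ₂ θ c lam).deriv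

lemma charDelta_strictConvex (d₂ β S₀ μ₂ θ c : ℝ) (hd₂ : 0 < d₂) :
    StrictConvexOn ℝ Set.univ (charDelta d₂ β S₀ μ₂ θ c) := by
  apply strictConvexOn_univ_of_deriv2_pos
  · unfold charDelta; fun_prop
  · intro x
    have h2 : deriv^[2] (charDelta d₂ β S₀ μ₂ θ c) x
        = deriv (deriv (charDelta d₂ β S₀ μ₂ θ c)) x := by
      simp [Function.iterate_succ, Function.comp]
    rw [h2, deriv_charDelta]
    have h1 := (expTerm (Real.sin θ) x).mul_const (Real.sin θ)
    have h2' := (expTermNeg (Real.sin θ) x).mul_const (-Real.sin θ)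
    have h3 := (expTerm (Real.cos θ) x).mul_const (Real.cos θ)
    have h4 := (expTermNeg (Real.cos θ) x).mul_const (-Real.cos θ)
    have hD := ((((h1.add h2').add h3).add h4).const_mul d₂).sub_const c
    erw [hD.deriv]
    have e1 := exp_add_exp_neg_ge (x * Real.sin θ)
    have e2 := exp_add_exp_neg_ge (x * Real.cos θ)
    have pyth := Real.sin_sq_add_cos_sq θ
    have hs := mul_nonneg (by linarith : (0:ℝ) ≤ Real.exp (x*Real.sin θ) + Real.exp (-(x*Real.sin θ)) - 2) (sq_nonneg (Real.sin θ))
    have hc := mul_nonneg (by linarith : (0:ℝ) ≤ Real.exp (x*Real.cos θ) + Real.exp (-(x*Real.cos θ)) - 2) (sq_nonneg (Real.cos θ))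
    have hX : (2:ℝ) ≤ Real.exp (x*Real.sin θ) * Real.sin θ * Real.sin θ +
        Real.exp (-(x*Real.sin θ)) * (-Real.sin θ) * (-Real.sin θ) +
        Real.exp (x*Real.cos θ) * Real.cos θ * Real.cos θ +
        Real.exp (-(x*Real.cos θ)) * (-Real.cos θ) * (-Real.cos θ) := by nlinarith [hs, hc, pyth]
    exact mul_pos hd₂ (by linarith)


lemma strict_mid {f : ℝ → ℝ} (hf : StrictConvexOn ℝ Set.univ f) {p q r : ℝ}
    (hpq : p < q) (hqr : q < r) (hp : f p ≤ 0) (hr : f r ≤ 0) : f q < 0 := by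
  set t := (r - q) / (r - p) with ht
  have h1 : 0 < r - p := by linarith
  have ht0 : 0 < t := div_pos (by linarith) h1
  have ht1 : t < 1 := (div_lt_one h1).2 (by linarith)
  have hq : t * p + (1 - t) * r = q := by
    field_simp [ht]
    have h3 : t * (r - p) = r - q := by rw [ht]; exact div_mul_cancel₀ _ h1.ne'
    linear_combination -h3
  have := hf.2 (Set.mem_univ p) (Set.mem_univ r) (ne_of_lt (lt_trans hpq hqr)) ht0
    (by linarith : (0:ℝ) < 1 - t) (by ring)
  simp only [smul_eq_mul] at this
  rw [hq] at this
  nlinarith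

lemma charDelta_lower (d₂ β S₀ μ₂ θ c lam : ℝ) (hd₂ : 0 < d₂) :
    d₂ * (lam^2/4) - c * lam + β * S₀ - μ₂ ≤ charDelta d₂ β S₀ μ₂ θ c lam := by
  have e1 := cosh_bd (lam * Real.sin θ)
  have e2 := cosh_bd (lam * Real.cos θ)
  have pyth := Real.sin_sq_add_cos_sq θ
  have hsq : (lam * Real.sin θ)^2 + (lam * Real.cos θ)^2 = lam^2 := by
    have : (lam * Real.sin θ)^2 + (lam * Real.cos θ)^2
        = lam^2 * (Real.sin θ^2 + Real.cos θ^2) := by ring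
    rw [this, pyth, mul_one]
  unfold charDelta
  have hsum : 4 + lam^2/4 ≤ Real.exp (lam * Real.sin θ) + Real.exp (-(lam * Real.sin θ)) +
      Real.exp (lam * Real.cos θ) + Real.exp (-(lam * Real.cos θ)) := by nlinarith
  nlinarith [mul_le_mul_of_nonneg_left (by linarith : lam^2/4 ≤
    Real.exp (lam * Real.sin θ) + Real.exp (-(lam * Real.sin θ)) +
    Real.exp (lam * Real.cos θ) + Real.exp (-(lam * Real.cos θ)) - 4) hd₂.le]

theorem stmt_3 (d₂ β S₀ μ₂ θ : ℝ)
    (hd₂ : 0 < d₂) (hβ : 0 < β) (hS₀ : 0 < S₀) (hμ₂ : 0 < μ₂)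
    (hR₀ : 1 < β * S₀ / μ₂)
    (cstar lamstar : ℝ) (hcstar : 0 < cstar) (hlamstar : 0 < lamstar)
    (hroot : charDelta d₂ β S₀ μ₂ θ cstar lamstar = 0)
    (hcrit : deriv (charDelta d₂ β S₀ μ₂ θ cstar) lamstar = 0) :
    ∀ c : ℝ, cstar < c →
      ∃ lam₁ lam₂ : ℝ, 0 < lam₁ ∧ lam₁ < lamstar ∧ lamstar < lam₂ ∧
        charDelta d₂ β S₀ μ₂ θ c lam₁ = 0 ∧ charDelta d₂ β S₀ μ₂ θ c lam₂ = 0 ∧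
        (∀ lam : ℝ, 0 < lam → charDelta d₂ β S₀ μ₂ θ c lam = 0 → lam = lam₁ ∨ lam = lam₂) ∧
        (∀ lam : ℝ, 0 < lam → lam < lam₁ → 0 < charDelta d₂ β S₀ μ₂ θ c lam) ∧
        (∀ lam : ℝ, lam₁ < lam → lam < lam₂ → charDelta d₂ β S₀ μ₂ θ c lam < 0) ∧
        (∀ lam : ℝ, lam₂ < lam → 0 < charDelta d₂ β S₀ μ₂ θ c lam) := by
  intro c hc
  set f := charDelta d₂ β S₀ μ₂ θ c with hf
  have hconv : StrictConvexOn ℝ Set.univ f := charDelta_strictConvex d₂ β S₀ μ₂ θ c hd₂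
  have hcont : Continuous f := by unfold f; unfold charDelta; fun_prop
  have hμβ : μ₂ < β * S₀ := by
    rw [lt_div_iff₀ hμ₂, one_mul] at hR₀; exact hR₀
  have hf0 : 0 < f 0 := by
    simp only [hf, charDelta, zero_mul, neg_zero, Real.exp_zero, mul_zero]
    nlinarith
  have hfstar : f lamstar < 0 := by
    have heq : f lamstar = charDelta d₂ β S₀ μ₂ θ cstar lamstar + (cstar - c) * lamstar := by
      simp only [hf, charDelta]; ring
    rw [heq, hroot]
    nlinarith
  -- upper point M
  set M := max (lamstar + 1) (4 * c / d₂) with hM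
  have hMstar : lamstar < M := lt_of_lt_of_le (by linarith) (le_max_left _ _)
  have hMpos : 0 < M := lt_trans hlamstar hMstar
  have hMc : 4 * c ≤ d₂ * M := by
    have := le_max_right (lamstar + 1) (4 * c / d₂)
    rw [div_le_iff₀ hd₂] at this
    linarith [this]
  have hfM : 0 < f M := by
    have := charDelta_lower d₂ β S₀ μ₂ θ c M hd₂
    have hcM : c * M ≤ d₂ * (M^2/4) := by nlinarith
    have : 0 < charDelta d₂ β S₀ μ₂ θ c M := by nlinarith
    exact this
  -- first root
  obtain ⟨lam₁, hmem₁, hval₁⟩ : ∃ x ∈ Set.Icc (0:ℝ) lamstar, f x = 0 := by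
    have h := intermediate_value_Icc' hlamstar.le hcont.continuousOn
      (Set.mem_Icc.2 ⟨hfstar.le, hf0.le⟩)
    obtain ⟨x, hx, hfx⟩ := h
    exact ⟨x, hx, hfx⟩
  have hlam₁pos : 0 < lam₁ := by
    rcases eq_or_lt_of_le hmem₁.1 with h | h
    · exfalso; rw [← h] at hval₁; linarith
    · exact h
  have hlam₁star : lam₁ < lamstar := by
    rcases eq_or_lt_of_le hmem₁.2 with h | h
    · exfalso; rw [h] at hval₁; linarith
    · exact h
  -- second root
  obtain ⟨lam₂, hmem₂, hval₂⟩ : ∃ x ∈ Set.Icc lamstar M, f x = 0 := by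
    have h := intermediate_value_Icc hMstar.le hcont.continuousOn
      (Set.mem_Icc.2 ⟨hfstar.le, hfM.le⟩)
    obtain ⟨x, hx, hfx⟩ := h
    exact ⟨x, hx, hfx⟩
  have hlam₂star : lamstar < lam₂ := by
    rcases eq_or_lt_of_le hmem₂.1 with h | h
    · exfalso; rw [← h] at hval₂; linarith
    · exact h
  have hlam₁₂ : lam₁ < lam₂ := lt_trans hlam₁star hlam₂star
  -- sign claims
  have hpos_left : ∀ lam : ℝ, 0 < lam → lam < lam₁ → 0 < f lam := by
    intro lam _ hlt
    by_contra h
    push_neg at h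
    have := strict_mid hconv hlt (lt_trans hlam₁star hlam₂star) h hval₂.le
    linarith [hval₁ ▸ this]
  have hneg_mid : ∀ lam : ℝ, lam₁ < lam → lam < lam₂ → f lam < 0 := by
    intro lam h1 h2
    exact strict_mid hconv h1 h2 hval₁.le hval₂.le
  have hpos_right : ∀ lam : ℝ, lam₂ < lam → 0 < f lam := by
    intro lam hlt
    by_contra h
    push_neg at h
    have := strict_mid hconv hlam₁₂ hlt hval₁.le h
    linarith [hval₂ ▸ this]
  refine ⟨lam₁, lam₂, hlam₁pos, hlam₁star, hlam₂star, hval₁, hval₂, ?_, hpos_left, hneg_mid, hpos_right⟩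
  intro lam hlam hroot'
  rcases lt_trichotomy lam lam₁ with h | h | h
  · exact absurd hroot' (ne_of_gt (hpos_left lam hlam h))
  · exact Or.inl h
  rcases lt_trichotomy lam lam₂ with h2 | h2 | h2
  · exact absurd hroot' (ne_of_lt (hneg_mid lam h h2))
  · exact Or.inr h2
  · exact absurd hroot' (ne_of_gt (hpos_right lam h2))
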